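/- Let {X_i, i = 1, ..., n} and {Y_i, i = 1, ..., n} be independent i.i.d. samples from the unit exponential distribution, with order statistics X_(1) ≤ ... ≤ X_(n) and Y_(1) ≤ ... ≤ Y_(n). Fix an arbitrary positive integer k and let Λ_r = {i ∈ ℕ : n - k + 1 ≤ i ≤ n}. Then q_{n,Λ_r} := max_{i ∈ Λ_r} X_(i)/Y_(i) converges in probability to 1 as n → ∞. -/

import Mathlib

open MeasureTheory ProbabilityTheory Filter Finset Real Topology ENNReal

/-- `orderStat n v i` is the `i`-th order statistic (1-indexed) of the values
`v 0, …, v (n-1)`, i.e. the `i`-th smallest among them. -/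
noncomputable def orderStat (n : ℕ) (v : ℕ → ℝ) (i : ℕ) : ℝ :=
  ((List.ofFn fun j : Fin n => v j).insertionSort (· ≤ ·)).getD (i - 1) 0

/-- The cumulative distribution function of the unit exponential distribution. -/
noncomputable def unitExpCDF (x : ℝ) : ℝ := if 0 ≤ x then 1 - Real.exp (-x) else 0

lemma filter_card_eq_countP (n : ℕ) (v : Fin n → ℝ) (q : ℝ → Prop) [DecidablePred q] :
    ((Finset.univ : Finset (Fin n)).filter (fun j => q (v j))).card
      = (List.ofFn v).countP (fun z => decide (q z)) := by
  rw [List.ofFn_eq_map, List.countP_map]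
  have h : ((fun z => decide (q z)) ∘ v) = fun j => decide (q (v j)) := rfl
  rw [h, List.countP_eq_length_filter]
  rfl

lemma orderStat_mem (n : ℕ) (v : ℕ → ℝ) {m : ℕ} (h1 : 1 ≤ m) (h2 : m ≤ n) :
    ∃ j : Fin n, orderStat n v m = v j := by
  set l := ((List.ofFn fun j : Fin n => v j).insertionSort (· ≤ ·)) with hl
  have hlen : l.length = n := by simp [hl]
  have hm : m - 1 < l.length := by omega
  have hget : orderStat n v m = l.get ⟨m-1, hm⟩ := List.getD_eq_getElem l 0 hm
  rw [hget]
  have hmem : l.get ⟨m-1, hm⟩ ∈ l := List.get_mem l _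
  have h2' : l.get ⟨m-1, hm⟩ ∈ List.ofFn (fun j : Fin n => v j) :=
    (List.perm_insertionSort _ _).mem_iff.mp hmem
  rw [List.mem_ofFn] at h2'
  obtain ⟨j, hj⟩ := h2'
  exact ⟨j, hj.symm⟩

lemma orderStat_mono (n : ℕ) (v : ℕ → ℝ) {a b : ℕ} (h1 : 1 ≤ a) (hab : a ≤ b) (h2 : b ≤ n) :
    orderStat n v a ≤ orderStat n v b := by
  set l := ((List.ofFn fun j : Fin n => v j).insertionSort (· ≤ ·)) with hl
  have hlen : l.length = n := by simp [hl]
  have ha : a - 1 < l.length := by omega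
  have hb : b - 1 < l.length := by omega
  have hsorted : l.Pairwise (· ≤ ·) := List.pairwise_insertionSort _ _
  have key := hsorted.rel_get_of_le (a := ⟨a-1, ha⟩) (b := ⟨b-1, hb⟩) (by simp [Fin.le_def]; omega)
  unfold orderStat
  rw [List.getD_eq_getElem _ 0 ha, List.getD_eq_getElem _ 0 hb]
  exact key

lemma orderStat_count (n : ℕ) (v : ℕ → ℝ) {m : ℕ} (h1 : 1 ≤ m) (h2 : m ≤ n) {y : ℝ}
    (h : orderStat n v m < y) :
    ((Finset.univ : Finset (Fin n)).filter (fun j : Fin n => y ≤ v (j : ℕ))).card ≤ n - m := by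
  set l := ((List.ofFn fun j : Fin n => v j).insertionSort (· ≤ ·)) with hl
  have hlen : l.length = n := by simp [hl]
  have hm : m - 1 < l.length := by omega
  have hget : orderStat n v m = l.get ⟨m-1, hm⟩ := List.getD_eq_getElem l 0 hm
  have hsorted : l.Pairwise (· ≤ ·) := List.pairwise_insertionSort _ _
  have htake : (l.take m).countP (fun z => decide (z < y)) = m := by
    rw [List.countP_eq_length.mpr, List.length_take, hlen]
    · omega
    · intro a ha
      rw [List.mem_iff_getElem] at ha
      obtain ⟨i, hi, hia⟩ := ha
      have hi' : i < m := by simp [List.length_take, hlen] at hi; omega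
      have hia' : a = l.get ⟨i, by omega⟩ := by rw [← hia]; exact List.getElem_take
      subst hia'
      have hle : l.get ⟨i, by omega⟩ ≤ l.get ⟨m-1, hm⟩ :=
        hsorted.rel_get_of_le (by simp [Fin.le_def]; omega)
      simp only [decide_eq_true_eq]
      exact lt_of_le_of_lt hle (hget ▸ h)
  have hcount : m ≤ l.countP (fun z => decide (z < y)) := by
    calc m = (l.take m).countP (fun z => decide (z < y)) := htake.symm
    _ ≤ l.countP _ := List.Sublist.countP_le (List.take_sublist _ _)
  have hsplit := List.length_eq_countP_add_countP (fun z => decide (z < y)) (l := l)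
  have hcomp : l.countP (fun z => decide ¬(decide (z < y)) = true) =
      l.countP (fun z => decide (y ≤ z)) := by
    apply List.countP_congr
    intro a _
    simp [not_lt]
  have hcard : ((Finset.univ : Finset (Fin n)).filter (fun j : Fin n => y ≤ v (j : ℕ))).card
      = l.countP (fun z => decide (y ≤ z)) := by
    rw [hl, (List.perm_insertionSort _ _).countP_eq]
    exact filter_card_eq_countP n _ (fun z => y ≤ z)
  omega

lemma orderStat_max_le (n : ℕ) (v : ℕ → ℝ) (hn : 1 ≤ n) {x : ℝ}
    (h : ∀ j < n, v j ≤ x) : orderStat n v n ≤ x := by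
  obtain ⟨j, hj⟩ := orderStat_mem n v hn le_rfl (m := n)
  rw [hj]; exact h j j.isLt

lemma orderStat_block_ge (n k : ℕ) (hk : 0 < k) (hkn : k ≤ n) (v : ℕ → ℝ) {y : ℝ}
    (h : ∀ t : Fin k, ∃ j : Fin n, (t:ℕ)*(n/k) ≤ (j:ℕ) ∧ (j:ℕ) < (t:ℕ)*(n/k) + n/k ∧ y ≤ v j) :
    y ≤ orderStat n v (n - k + 1) := by
  by_contra h'
  push_neg at h'
  have hcnt := orderStat_count n v (m := n - k + 1) (by omega) (by omega) h'
  choose g hg1 hg2 hg3 using h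
  have hinj : Set.InjOn g (Finset.univ : Finset (Fin k)) := by
    intro a _ b _ hab
    by_contra hne
    rcases Nat.lt_or_ge (a:ℕ) (b:ℕ) with hlt | hge
    · have h1 : ((g a : ℕ)) < (b:ℕ) * (n/k) := by
        have := hg2 a
        have : (g a : ℕ) < ((a:ℕ)+1) * (n/k) := by
          have := hg2 a; nlinarith [hg2 a]
        calc (g a : ℕ) < ((a:ℕ)+1) * (n/k) := this
        _ ≤ (b:ℕ) * (n/k) := Nat.mul_le_mul_right _ (by omega)
      have h2 : (b:ℕ) * (n/k) ≤ (g b : ℕ) := hg1 b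
      rw [hab] at h1; omega
    · have hlt' : (b:ℕ) < (a:ℕ) := by
        rcases Nat.lt_or_ge (b:ℕ) (a:ℕ) with h | h
        · exact h
        · exfalso; exact hne (Fin.ext (by omega))
      have h1 : ((g b : ℕ)) < (a:ℕ) * (n/k) := by
        have : (g b : ℕ) < ((b:ℕ)+1) * (n/k) := by nlinarith [hg2 b]
        calc (g b : ℕ) < ((b:ℕ)+1) * (n/k) := this
        _ ≤ (a:ℕ) * (n/k) := Nat.mul_le_mul_right _ (by omega)
      have h2 : (a:ℕ) * (n/k) ≤ (g a : ℕ) := hg1 a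
      rw [hab] at h2; omega
  have hmapsto : ∀ a ∈ (Finset.univ : Finset (Fin k)),
      g a ∈ (Finset.univ : Finset (Fin n)).filter (fun j : Fin n => y ≤ v (j : ℕ)) := by
    intro a _
    simp only [Finset.mem_filter, Finset.mem_univ, true_and]
    exact hg3 a
  have := Finset.card_le_card_of_injOn g hmapsto hinj
  simp only [Finset.card_univ, Fintype.card_fin] at this
  omega

lemma tail_prob {Ω : Type*} [MeasurableSpace Ω] (μ : Measure Ω) [IsProbabilityMeasure μ]
    (W : Ω → ℝ) (hW : Measurable W)
    (hcdf : ∀ x, μ {ω | W ω ≤ x} = ENNReal.ofReal (unitExpCDF x)) {x : ℝ} (hx : 0 ≤ x) :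
    μ {ω | x < W ω} = ENNReal.ofReal (Real.exp (-x)) := by
  have hms : MeasurableSet {ω | W ω ≤ x} := hW measurableSet_Iic
  have hcompl : {ω | x < W ω} = {ω | W ω ≤ x}ᶜ := by ext ω; simp [not_le]
  have hexp : Real.exp (-x) ≤ 1 := Real.exp_le_one_iff.mpr (by linarith)
  rw [hcompl, prob_compl_eq_one_sub hms, hcdf, unitExpCDF, if_pos hx]
  have h1 : (1:ℝ≥0∞) = ENNReal.ofReal 1 := by simp
  rw [h1, ← ENNReal.ofReal_sub _ (by linarith : (0:ℝ) ≤ 1 - Real.exp (-x))]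
  congr 1; ring

lemma indep_inter_prob {Ω : Type*} [MeasurableSpace Ω] (μ : Measure Ω) [IsProbabilityMeasure μ]
    (F : ℕ ⊕ ℕ → Ω → ℝ)
    (hindep : iIndepFun F μ)
    (ι : ℕ → ℕ ⊕ ℕ) (hι : Function.Injective ι)
    (y : ℝ) (c : ℝ≥0∞) (hc : ∀ j : ℕ, μ {ω | F (ι j) ω ≤ y} = c) (B : Finset ℕ) :
    μ (⋂ j ∈ B, {ω | F (ι j) ω ≤ y}) = c ^ B.card := by
  have key := (iIndepFun_iff_measure_inter_preimage_eq_mul.mp hindep)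
    (B.image ι) (sets := fun _ => Set.Iic y) (fun i _ => measurableSet_Iic)
  have hset : (⋂ i ∈ B.image ι, F i ⁻¹' Set.Iic y) = ⋂ j ∈ B, {ω | F (ι j) ω ≤ y} := by
    ext ω
    simp only [Set.mem_iInter, Set.mem_preimage, Set.mem_Iic, Finset.mem_image, Set.mem_setOf_eq]
    constructor
    · intro h j hj; exact h (ι j) ⟨j, hj, rfl⟩
    · rintro h i ⟨j, hj, rfl⟩; exact h j hj
  have hprod : ∏ i ∈ B.image ι, μ (F i ⁻¹' Set.Iic y) = c ^ B.card := by
    rw [Finset.prod_image (fun a _ b _ h => hι h)]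
    have : ∀ j ∈ B, μ (F (ι j) ⁻¹' Set.Iic y) = c := fun j _ => hc j
    rw [Finset.prod_congr rfl this, Finset.prod_const]
  rw [← hset, key, hprod]

lemma lim1 {δ : ℝ} (hδ : 0 < δ) :
    Tendsto (fun n : ℕ => (n:ℝ) * Real.exp (-((1+δ) * Real.log n))) atTop (𝓝 0) := by
  have h0 : Tendsto (fun n : ℕ => (n:ℝ) ^ (-δ)) atTop (𝓝 0) :=
    (tendsto_rpow_neg_atTop hδ).comp tendsto_natCast_atTop_atTop
  apply h0.congr'
  filter_upwards [eventually_ge_atTop 1] with n hn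
  have hn' : (0:ℝ) < n := by exact_mod_cast hn
  rw [Real.rpow_def_of_pos hn']
  rw [← Real.exp_log hn']
  rw [← Real.exp_add]
  congr 1
  rw [Real.log_exp]
  ring

lemma lim2 {δ : ℝ} (hδ : 0 < δ) (hδ1 : δ < 1) (k : ℕ) (hk : 0 < k) :
    Tendsto (fun n : ℕ => (k:ℝ) * (1 - Real.exp (-((1-δ) * Real.log n))) ^ (n / k)) atTop (𝓝 0) := by
  have hk' : (0:ℝ) < k := by exact_mod_cast hk
  have hdom : Tendsto (fun n : ℕ => (k:ℝ) * Real.exp (-((n:ℝ) ^ δ / (2*k)))) atTop (𝓝 0) := by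
    have h1 : Tendsto (fun n : ℕ => (n:ℝ) ^ δ / (2*k)) atTop atTop :=
      ((tendsto_rpow_atTop hδ).comp tendsto_natCast_atTop_atTop).atTop_div_const (by positivity)
    have h2 : Tendsto (fun n : ℕ => Real.exp (-((n:ℝ) ^ δ / (2*k)))) atTop (𝓝 0) :=
      Real.tendsto_exp_atBot.comp (tendsto_neg_atTop_atBot.comp h1)
    simpa using h2.const_mul (k:ℝ)
  apply squeeze_zero' (g := fun n : ℕ => (k:ℝ) * Real.exp (-((n:ℝ) ^ δ / (2*k))))
  · filter_upwards [eventually_ge_atTop 1] with n hn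
    have hn' : (0:ℝ) < n := by exact_mod_cast hn
    have hp1 : Real.exp (-((1-δ) * Real.log n)) ≤ 1 :=
      Real.exp_le_one_iff.mpr (by nlinarith [Real.log_nonneg (by exact_mod_cast hn : (1:ℝ) ≤ n)])
    exact mul_nonneg hk'.le (pow_nonneg (by linarith) _)
  · filter_upwards [eventually_ge_atTop (2*k)] with n hn
    set p := Real.exp (-((1-δ) * Real.log n)) with hp
    have hn1 : 1 ≤ n := by omega
    have hn' : (0:ℝ) < n := by exact_mod_cast hn1
    have hlogn : 0 ≤ Real.log n := Real.log_nonneg (by exact_mod_cast hn1)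
    have hp0 : 0 < p := Real.exp_pos _
    have hp1 : p ≤ 1 := Real.exp_le_one_iff.mpr (by nlinarith)
    have hm : ((n / k : ℕ) : ℝ) ≥ (n:ℝ) / (2*k) := by
      have hmod := Nat.div_add_mod n k
      have hmodlt : n % k < k := Nat.mod_lt _ hk
      have hc : (k:ℝ) * ((n/k:ℕ):ℝ) + ((n % k : ℕ):ℝ) = (n:ℝ) := by exact_mod_cast hmod
      have : ((n/k : ℕ):ℝ) = ((n:ℝ) - (n % k : ℕ)) / k := by
        rw [eq_div_iff (ne_of_gt hk')]
        linarith
      rw [this]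
      rw [ge_iff_le, div_le_div_iff₀ (by positivity) hk']
      have hcast : ((n % k : ℕ):ℝ) ≤ (k:ℝ) - 1 := by
        have : (n % k : ℕ) ≤ k - 1 := by omega
        have h2 : ((n%k : ℕ):ℝ) ≤ ((k-1 : ℕ):ℝ) := by exact_mod_cast this
        rw [Nat.cast_sub hk] at h2; simpa using h2
      have hn2k : (2*k:ℝ) ≤ n := by exact_mod_cast hn
      nlinarith
    have hstep1 : (1 - p) ^ (n/k) ≤ Real.exp (-p) ^ (n/k) :=
      pow_le_pow_left₀ (by linarith) (by linarith [Real.add_one_le_exp (-p)]) _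
    have hstep2 : Real.exp (-p) ^ (n/k) = Real.exp (-(p * (n/k : ℕ))) := by
      rw [← Real.exp_nat_mul]; ring_nf
    have hpval : p = (n:ℝ) ^ (δ - 1) := by
      rw [hp, Real.rpow_def_of_pos hn']
      congr 1; ring
    have hkey : (n:ℝ)^δ / (2*k) ≤ p * (n/k : ℕ) := by
      rw [hpval]
      have h1 : (n:ℝ)^(δ-1) * ((n:ℝ)/(2*k)) ≤ (n:ℝ)^(δ-1) * ((n/k:ℕ):ℝ) :=
        mul_le_mul_of_nonneg_left hm (Real.rpow_nonneg hn'.le _)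
      have h2 : (n:ℝ)^(δ-1) * ((n:ℝ)/(2*k)) = (n:ℝ)^δ / (2*k) := by
        rw [show (n:ℝ)^(δ-1) * ((n:ℝ)/(2*k)) = ((n:ℝ)^(δ-1) * (n:ℝ)) / (2*k) by ring]
        congr 1
        rw [show (n:ℝ)^(δ-1) * (n:ℝ) = (n:ℝ)^(δ-1) * (n:ℝ)^(1:ℝ) by rw [Real.rpow_one]]
        rw [← Real.rpow_add hn']; ring_nf
      linarith [h2 ▸ h1]
    have hstep3 : Real.exp (-(p * (n/k : ℕ))) ≤ Real.exp (-((n:ℝ)^δ/(2*k))) := by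
      apply Real.exp_le_exp.mpr; linarith
    have hfin := hstep1.trans (hstep2 ▸ hstep3)
    exact mul_le_mul_of_nonneg_left hfin hk'.le
  · exact hdom

theorem stmt4 {Ω : Type*} [MeasurableSpace Ω] (μ : Measure Ω) [IsProbabilityMeasure μ]
    (X Y : ℕ → Ω → ℝ)
    (hmeas : ∀ j, Measurable (Sum.elim X Y j))
    (hindep : iIndepFun (Sum.elim X Y) μ)
    (hX : ∀ i x, μ {ω | X i ω ≤ x} = ENNReal.ofReal (unitExpCDF x))
    (hY : ∀ i x, μ {ω | Y i ω ≤ x} = ENNReal.ofReal (unitExpCDF x))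
    (k : ℕ) (hk : 0 < k) :
    TendstoInMeasure μ
      (fun n ω => ⨆ i : Fin k,
        orderStat n (fun j => X j ω) (n - i) / orderStat n (fun j => Y j ω) (n - i))
      atTop (fun _ => (1 : ℝ)) := by
  have hmeasX : ∀ j, Measurable (X j) := fun j => hmeas (Sum.inl j)
  have hmeasY : ∀ j, Measurable (Y j) := fun j => hmeas (Sum.inr j)
  rw [tendstoInMeasure_iff_dist]
  intro ε hε
  set δ : ℝ := min (ε/8) (1/4) with hδdef
  have hδ0 : 0 < δ := lt_min (by linarith) (by norm_num)
  have hδ4 : δ ≤ 1/4 := min_le_right _ _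
  have hδε : 4*δ ≤ ε/2 := by
    have := min_le_left (ε/8) (1/4); simp only [← hδdef] at this; linarith
  have hδ1 : δ < 1 := by linarith
  have hb1 := lim1 hδ0
  have hb2 := lim2 hδ0 hδ1 k hk
  set B : ℕ → ℝ≥0∞ := fun n =>
    (ENNReal.ofReal ((n:ℝ) * Real.exp (-((1+δ) * Real.log n)))
      + ENNReal.ofReal ((k:ℝ) * (1 - Real.exp (-((1-δ) * Real.log n))) ^ (n / k)))
    + (ENNReal.ofReal ((n:ℝ) * Real.exp (-((1+δ) * Real.log n)))
      + ENNReal.ofReal ((k:ℝ) * (1 - Real.exp (-((1-δ) * Real.log n))) ^ (n / k))) with hBdef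
  have hB : Tendsto B atTop (𝓝 0) := by
    have h1 := ENNReal.tendsto_ofReal hb1
    have h2 := ENNReal.tendsto_ofReal hb2
    have h3 := (h1.add h2).add (h1.add h2)
    simpa only [add_zero, ENNReal.ofReal_zero] using h3
  refine tendsto_of_tendsto_of_tendsto_of_le_of_le' tendsto_const_nhds hB
    (Eventually.of_forall fun n => zero_le) ?_
  filter_upwards [eventually_ge_atTop (max 2 (2*k))] with n hn
  have hn2 : 2 ≤ n := le_trans (le_max_left _ _) hn
  have hn2k : 2*k ≤ n := le_trans (le_max_right _ _) hn
  have hkn : k ≤ n := by omega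
  have hn1 : (1:ℝ) < n := by exact_mod_cast hn2
  have hL : 0 < Real.log n := Real.log_pos hn1
  set xn := (1+δ) * Real.log n with hxndef
  set yn := (1-δ) * Real.log n with hyndef
  have hxn0 : 0 ≤ xn := by positivity
  have hyn0 : 0 < yn := by
    apply mul_pos (by linarith) hL
  have hynxn : yn ≤ xn := by nlinarith
  set A1 : Set Ω := ⋃ j ∈ Finset.range n, {ω | xn < X j ω} with hA1def
  set A2 : Set Ω := ⋃ t ∈ Finset.range k,
      ⋂ j ∈ Finset.Ico (t*(n/k)) (t*(n/k) + n/k), {ω | X j ω < yn} with hA2def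
  set A3 : Set Ω := ⋃ j ∈ Finset.range n, {ω | xn < Y j ω} with hA3def
  set A4 : Set Ω := ⋃ t ∈ Finset.range k,
      ⋂ j ∈ Finset.Ico (t*(n/k)) (t*(n/k) + n/k), {ω | Y j ω < yn} with hA4def
  -- inclusion
  have hsub : {x | ε ≤ dist (⨆ i : Fin k,
        orderStat n (fun j => X j x) (n - (i:ℕ)) / orderStat n (fun j => Y j x) (n - (i:ℕ))) 1}
      ⊆ (A1 ∪ A2) ∪ (A3 ∪ A4) := by
    intro ω hω
    simp only [Set.mem_setOf_eq] at hω
    by_contra hnot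
    simp only [Set.mem_union, not_or] at hnot
    obtain ⟨⟨hA1, hA2⟩, hA3, hA4⟩ := hnot
    have hXmax : orderStat n (fun j => X j ω) n ≤ xn := by
      apply orderStat_max_le n _ (by omega)
      intro j hj
      by_contra hgt
      exact hA1 (Set.mem_biUnion (Finset.mem_range.mpr hj)
        (Set.mem_setOf_eq ▸ not_le.mp hgt))
    have hYmax : orderStat n (fun j => Y j ω) n ≤ xn := by
      apply orderStat_max_le n _ (by omega)
      intro j hj
      by_contra hgt
      exact hA3 (Set.mem_biUnion (Finset.mem_range.mpr hj)
        (Set.mem_setOf_eq ▸ not_le.mp hgt))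
    have hblock : ∀ (W : ℕ → Ω → ℝ), ω ∉ (⋃ t ∈ Finset.range k,
        ⋂ j ∈ Finset.Ico (t*(n/k)) (t*(n/k) + n/k), {ω | W j ω < yn}) →
        yn ≤ orderStat n (fun j => W j ω) (n - k + 1) := by
      intro W hW
      apply orderStat_block_ge n k hk hkn
      intro t
      have ht : ω ∉ ⋂ j ∈ Finset.Ico ((t:ℕ)*(n/k)) ((t:ℕ)*(n/k) + n/k), {ω | W j ω < yn} := by
        intro hmem
        exact hW (Set.mem_biUnion (Finset.mem_range.mpr t.isLt) hmem)
      simp only [Set.mem_iInter, Set.mem_setOf_eq, not_forall, not_lt] at ht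
      obtain ⟨j, hjmem, hj⟩ := ht
      have hjbd := Finset.mem_Ico.mp hjmem
      have e1 : ((t:ℕ)+1)*(n/k) = (t:ℕ)*(n/k) + (n/k) := by ring
      have e2 : ((t:ℕ)+1)*(n/k) ≤ k*(n/k) := Nat.mul_le_mul_right _ (by omega)
      have e3 : k*(n/k) ≤ n := by rw [mul_comm]; exact Nat.div_mul_le_self n k
      have hjn : j < n := by omega
      exact ⟨⟨j, hjn⟩, hjbd.1, hjbd.2, hj⟩
    have hXmin := hblock X hA2
    have hYmin := hblock Y hA4
    -- ratio bounds
    have hratio : ∀ i : Fin k,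
        1 - 4*δ ≤ orderStat n (fun j => X j ω) (n - (i:ℕ)) /
            orderStat n (fun j => Y j ω) (n - (i:ℕ)) ∧
        orderStat n (fun j => X j ω) (n - (i:ℕ)) /
            orderStat n (fun j => Y j ω) (n - (i:ℕ)) ≤ 1 + 4*δ := by
      intro i
      have hi : (i:ℕ) < k := i.isLt
      set a := orderStat n (fun j => X j ω) (n - (i:ℕ)) with hadef
      set b := orderStat n (fun j => Y j ω) (n - (i:ℕ)) with hbdef
      have hau : a ≤ xn :=
        le_trans (orderStat_mono n _ (by omega) (by omega) le_rfl) hXmax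
      have hal : yn ≤ a :=
        le_trans hXmin (orderStat_mono n _ (by omega) (by omega) (by omega))
      have hbu : b ≤ xn :=
        le_trans (orderStat_mono n _ (by omega) (by omega) le_rfl) hYmax
      have hbl : yn ≤ b :=
        le_trans hYmin (orderStat_mono n _ (by omega) (by omega) (by omega))
      have hb0 : 0 < b := lt_of_lt_of_le hyn0 hbl
      have ha0 : 0 ≤ a := le_trans hyn0.le hal
      constructor
      · have h5 : yn / xn ≤ a / b := div_le_div₀ ha0 hal hb0 hbu
        have h6 : 1 - 4*δ ≤ yn / xn := by
          rw [hyndef, hxndef, mul_div_mul_right _ _ (ne_of_gt hL)]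
          rw [le_div_iff₀ (by linarith)]
          nlinarith
        linarith
      · have h5 : a / b ≤ xn / yn := div_le_div₀ (by linarith) hau hyn0 hbl
        have h6 : xn / yn ≤ 1 + 4*δ := by
          rw [hyndef, hxndef, mul_div_mul_right _ _ (ne_of_gt hL)]
          rw [div_le_iff₀ (by linarith)]
          nlinarith
        linarith
    have hne : Nonempty (Fin k) := ⟨⟨0, hk⟩⟩
    have hub : (⨆ i : Fin k, orderStat n (fun j => X j ω) (n - (i:ℕ)) /
        orderStat n (fun j => Y j ω) (n - (i:ℕ))) ≤ 1 + 4*δ :=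
      ciSup_le fun i => (hratio i).2
    have hlb : 1 - 4*δ ≤ ⨆ i : Fin k, orderStat n (fun j => X j ω) (n - (i:ℕ)) /
        orderStat n (fun j => Y j ω) (n - (i:ℕ)) :=
      le_ciSup_of_le (Set.Finite.bddAbove (Set.finite_range _)) ⟨0, hk⟩ (hratio ⟨0, hk⟩).1
    have hdist : dist (⨆ i : Fin k, orderStat n (fun j => X j ω) (n - (i:ℕ)) /
        orderStat n (fun j => Y j ω) (n - (i:ℕ))) 1 ≤ 4*δ := by
      rw [Real.dist_eq]
      apply abs_le.mpr
      constructor <;> linarith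
    linarith [hω]
  -- measure bounds
  have hμ1 : μ A1 ≤ ENNReal.ofReal ((n:ℝ) * Real.exp (-xn)) := by
    calc μ A1 ≤ ∑ j ∈ Finset.range n, μ {ω | xn < X j ω} := measure_biUnion_finset_le _ _
    _ = ∑ _j ∈ Finset.range n, ENNReal.ofReal (Real.exp (-xn)) :=
        Finset.sum_congr rfl fun j _ => tail_prob μ (X j) (hmeasX j) (hX j) hxn0
    _ = (n : ℝ≥0∞) * ENNReal.ofReal (Real.exp (-xn)) := by
        rw [Finset.sum_const, Finset.card_range, nsmul_eq_mul]
    _ = ENNReal.ofReal ((n:ℝ) * Real.exp (-xn)) := by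
        rw [ENNReal.ofReal_mul (by positivity)]
        congr 1
        simp
  have hμ3 : μ A3 ≤ ENNReal.ofReal ((n:ℝ) * Real.exp (-xn)) := by
    calc μ A3 ≤ ∑ j ∈ Finset.range n, μ {ω | xn < Y j ω} := measure_biUnion_finset_le _ _
    _ = ∑ _j ∈ Finset.range n, ENNReal.ofReal (Real.exp (-xn)) :=
        Finset.sum_congr rfl fun j _ => tail_prob μ (Y j) (hmeasY j) (hY j) hxn0
    _ = (n : ℝ≥0∞) * ENNReal.ofReal (Real.exp (-xn)) := by
        rw [Finset.sum_const, Finset.card_range, nsmul_eq_mul]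
    _ = ENNReal.ofReal ((n:ℝ) * Real.exp (-xn)) := by
        rw [ENNReal.ofReal_mul (by positivity)]
        congr 1
        simp
  have hexpyn : Real.exp (-yn) ≤ 1 := Real.exp_le_one_iff.mpr (by linarith)
  have hblockμ : ∀ (W : ℕ → Ω → ℝ) (ι : ℕ → ℕ ⊕ ℕ), Function.Injective ι →
      (∀ j : ℕ, Sum.elim X Y (ι j) = W j) →
      (∀ i x, μ {ω | W i ω ≤ x} = ENNReal.ofReal (unitExpCDF x)) →
      μ (⋃ t ∈ Finset.range k,
        ⋂ j ∈ Finset.Ico (t*(n/k)) (t*(n/k) + n/k), {ω | W j ω < yn})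
        ≤ ENNReal.ofReal ((k:ℝ) * (1 - Real.exp (-yn)) ^ (n / k)) := by
    intro W ι hι hιW hcdf
    have hc : ∀ j : ℕ, μ {ω | Sum.elim X Y (ι j) ω ≤ yn}
        = ENNReal.ofReal (1 - Real.exp (-yn)) := by
      intro j
      rw [hιW j, hcdf j yn]
      congr 1
      rw [unitExpCDF, if_pos hyn0.le]
    calc μ (⋃ t ∈ Finset.range k,
        ⋂ j ∈ Finset.Ico (t*(n/k)) (t*(n/k) + n/k), {ω | W j ω < yn})
        ≤ ∑ t ∈ Finset.range k,
          μ (⋂ j ∈ Finset.Ico (t*(n/k)) (t*(n/k) + n/k), {ω | W j ω < yn}) :=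
        measure_biUnion_finset_le _ _
    _ ≤ ∑ _t ∈ Finset.range k, ENNReal.ofReal (1 - Real.exp (-yn)) ^ (n/k) := by
        refine Finset.sum_le_sum fun t _ => ?_
        have hmono : (⋂ j ∈ Finset.Ico (t*(n/k)) (t*(n/k) + n/k), {ω | W j ω < yn})
            ⊆ ⋂ j ∈ Finset.Ico (t*(n/k)) (t*(n/k) + n/k), {ω | Sum.elim X Y (ι j) ω ≤ yn} := by
          refine Set.iInter₂_mono fun j _ => ?_
          intro ω hω
          rw [Set.mem_setOf_eq, hιW j]
          exact le_of_lt hω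
        refine le_trans (measure_mono hmono) ?_
        rw [indep_inter_prob μ (Sum.elim X Y) hindep ι hι yn _ hc _]
        rw [Nat.card_Ico]
        simp
    _ = (k : ℝ≥0∞) * ENNReal.ofReal (1 - Real.exp (-yn)) ^ (n/k) := by
        rw [Finset.sum_const, Finset.card_range, nsmul_eq_mul]
    _ = ENNReal.ofReal ((k:ℝ) * (1 - Real.exp (-yn)) ^ (n / k)) := by
        rw [ENNReal.ofReal_mul (by positivity), ENNReal.ofReal_pow (by linarith)]
        congr 1
        simp
  have hμ2 : μ A2 ≤ ENNReal.ofReal ((k:ℝ) * (1 - Real.exp (-yn)) ^ (n / k)) :=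
    hblockμ X Sum.inl Sum.inl_injective (fun j => rfl) hX
  have hμ4 : μ A4 ≤ ENNReal.ofReal ((k:ℝ) * (1 - Real.exp (-yn)) ^ (n / k)) :=
    hblockμ Y Sum.inr Sum.inr_injective (fun j => rfl) hY
  calc μ {x | ε ≤ dist (⨆ i : Fin k,
        orderStat n (fun j => X j x) (n - (i:ℕ)) / orderStat n (fun j => Y j x) (n - (i:ℕ))) 1}
      ≤ μ ((A1 ∪ A2) ∪ (A3 ∪ A4)) := measure_mono hsub
  _ ≤ μ (A1 ∪ A2) + μ (A3 ∪ A4) := measure_union_le _ _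
  _ ≤ (μ A1 + μ A2) + (μ A3 + μ A4) := add_le_add (measure_union_le _ _) (measure_union_le _ _)
  _ ≤ B n := add_le_add (add_le_add hμ1 hμ2) (add_le_add hμ3 hμ4)
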